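/- Let G be a directed graph and T a rooted binary 'separation tree' where each node w is assigned a vertex subset (separator) S_w, the subsets partition V(G), and the subtree at w induces a subgraph G_w such that every edge of G between the two child-subtrees' vertex sets has an endpoint path through S_w (formally: every path in G_w between a vertex in the left subtree's vertices and a vertex in the right subtree's vertices contains a vertex of S_w). Then for any two vertices p, q with p ∈ S_v and q ∈ S_u, and any p-to-q path π in G, there exists an ancestor node w common to v and u (on the path from their lowest common ancestor to the root) such that π is entirely contained in G_w and π intersects S_w. -/

import Mathlib

inductive SepTree (V : Type*) : Type _
  | nil : SepTree V
  | node (S : Set V) (l r : SepTree V) : SepTree V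

namespace SepTree

def verts {V : Type*} : SepTree V → Set V
  | nil => ∅
  | node S l r => S ∪ l.verts ∪ r.verts

def sep {V : Type*} : SepTree V → Set V
  | nil => ∅
  | node S _ _ => S

inductive Subtree {V : Type*} : SepTree V → SepTree V → Prop
  | refl (t : SepTree V) : Subtree t t
  | left {t l r : SepTree V} {S : Set V} : Subtree t l → Subtree t (node S l r)
  | right {t l r : SepTree V} {S : Set V} : Subtree t r → Subtree t (node S l r)

/-- The separation-tree property: separators are disjoint from the children's
vertex sets, the children's vertex sets are disjoint, and every path in the
induced subgraph between a vertex of one child's subtree and a vertex of the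
other child's subtree contains a vertex of the separator. -/
def Valid {V : Type*} (G : V → V → Prop) : SepTree V → Prop
  | nil => True
  | node S l r =>
      Disjoint S l.verts ∧ Disjoint S r.verts ∧ Disjoint l.verts r.verts ∧
      (∀ π : List V, π.Chain' G → (∀ x ∈ π, x ∈ S ∪ l.verts ∪ r.verts) →
        (∃ a, π.head? = some a ∧ a ∈ l.verts) →
        (∃ z, π.getLast? = some z ∧ z ∈ r.verts) →
        ∃ x ∈ π, x ∈ S) ∧
      (∀ π : List V, π.Chain' G → (∀ x ∈ π, x ∈ S ∪ l.verts ∪ r.verts) →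
        (∃ a, π.head? = some a ∧ a ∈ r.verts) →
        (∃ z, π.getLast? = some z ∧ z ∈ l.verts) →
        ∃ x ∈ π, x ∈ S) ∧
      Valid G l ∧ Valid G r

end SepTree

lemma exists_crossing_edge {V : Type*} {G : V → V → Prop} {A B : Set V}
    (hd : Disjoint A B) :
    ∀ π : List V, π.Chain' G → (∀ x ∈ π, x ∈ A ∪ B) →
      (∃ x ∈ π, x ∈ A) → (∃ x ∈ π, x ∈ B) →
      ∃ x y, G x y ∧ ((x ∈ A ∧ y ∈ B) ∨ (x ∈ B ∧ y ∈ A))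
  | [], _, _, ha, _ => by simp at ha
  | [a], _, _, ha, hb => by
      simp only [List.mem_singleton, exists_eq_left] at ha hb
      exact absurd rfl (hd.ne_of_mem ha hb)
  | a :: b :: rest, hc, hmem, ha, hb => by
      have hGab : G a b := hc.rel_head
      have hbmem : b ∈ A ∪ B := hmem b (by simp)
      have hamem : a ∈ A ∪ B := hmem a (by simp)
      rcases hamem with haA | haB
      · rcases hbmem with hbA | hbB
        · -- a, b both in A; recurse on b :: rest
          have hb' : ∃ x ∈ b :: rest, x ∈ B := by
            obtain ⟨x, hx, hxB⟩ := hb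
            rcases List.mem_cons.mp hx with rfl | hx
            · exact absurd rfl (hd.ne_of_mem haA hxB)
            · exact ⟨x, hx, hxB⟩
          exact exists_crossing_edge hd (b :: rest) hc.tail
            (fun x hx => hmem x (List.mem_cons_of_mem _ hx))
            ⟨b, by simp, hbA⟩ hb'
        · exact ⟨a, b, hGab, Or.inl ⟨haA, hbB⟩⟩
      · rcases hbmem with hbA | hbB
        · exact ⟨a, b, hGab, Or.inr ⟨haB, hbA⟩⟩
        · have ha' : ∃ x ∈ b :: rest, x ∈ A := by
            obtain ⟨x, hx, hxA⟩ := ha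
            rcases List.mem_cons.mp hx with rfl | hx
            · exact absurd rfl (hd.ne_of_mem hxA haB)
            · exact ⟨x, hx, hxA⟩
          exact exists_crossing_edge hd (b :: rest) hc.tail
            (fun x hx => hmem x (List.mem_cons_of_mem _ hx))
            ha' ⟨b, by simp, hbB⟩

lemma sep_main {V : Type*} (G : V → V → Prop) :
    ∀ T : SepTree V, SepTree.Valid G T → ∀ π : List V, π ≠ [] → π.Chain' G →
      (∀ x ∈ π, x ∈ T.verts) →
      ∃ t : SepTree V, SepTree.Subtree t T ∧ (∀ x ∈ π, x ∈ t.verts) ∧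
        ∃ x ∈ π, x ∈ t.sep
  | SepTree.nil, _, π, hne, _, hmem => by
      obtain ⟨a, rest, rfl⟩ := List.exists_cons_of_ne_nil hne
      exact absurd (hmem a (by simp)) (by simp [SepTree.verts])
  | SepTree.node S l r, hvalid, π, hne, hc, hmem => by
      obtain ⟨hSl, hSr, hlr, hcross1, hcross2, hvl, hvr⟩ := hvalid
      by_cases hS : ∃ x ∈ π, x ∈ S
      · exact ⟨SepTree.node S l r, SepTree.Subtree.refl _, hmem, hS⟩
      push_neg at hS
      have hmem' : ∀ x ∈ π, x ∈ l.verts ∪ r.verts := by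
        intro x hx
        rcases hmem x hx with (hxS | hxl) | hxr
        · exact absurd hxS (hS x hx)
        · exact Or.inl hxl
        · exact Or.inr hxr
      by_cases hl : ∀ x ∈ π, x ∈ l.verts
      · obtain ⟨t, ht, h1, h2⟩ := sep_main G l hvl π hne hc hl
        exact ⟨t, SepTree.Subtree.left ht, h1, h2⟩
      by_cases hr : ∀ x ∈ π, x ∈ r.verts
      · obtain ⟨t, ht, h1, h2⟩ := sep_main G r hvr π hne hc hr
        exact ⟨t, SepTree.Subtree.right ht, h1, h2⟩
      push_neg at hl hr
      have hexl : ∃ x ∈ π, x ∈ l.verts := by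
        obtain ⟨x, hx, hxnr⟩ := hr
        exact ⟨x, hx, (hmem' x hx).resolve_right hxnr⟩
      have hexr : ∃ x ∈ π, x ∈ r.verts := by
        obtain ⟨x, hx, hxnl⟩ := hl
        exact ⟨x, hx, (hmem' x hx).resolve_left hxnl⟩
      obtain ⟨x, y, hxy, hor⟩ := exists_crossing_edge hlr π hc hmem' hexl hexr
      exfalso
      rcases hor with ⟨hxl, hyr⟩ | ⟨hxr, hyl⟩
      · obtain ⟨z, hz, hzS⟩ := hcross1 [x, y] (List.isChain_pair.mpr hxy)
          (by intro a ha
              simp only [List.mem_cons, List.not_mem_nil, or_false] at ha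
              rcases ha with rfl | rfl
              · exact Or.inl (Or.inr hxl)
              · exact Or.inr hyr)
          ⟨x, by simp, hxl⟩ ⟨y, by simp, hyr⟩
        simp only [List.mem_cons, List.not_mem_nil, or_false] at hz
        rcases hz with hz | hz
        · exact hSl.ne_of_mem hzS (by rw [hz]; exact hxl) rfl
        · exact hSr.ne_of_mem hzS (by rw [hz]; exact hyr) rfl
      · obtain ⟨z, hz, hzS⟩ := hcross2 [x, y] (List.isChain_pair.mpr hxy)
          (by intro a ha
              simp only [List.mem_cons, List.not_mem_nil, or_false] at ha
              rcases ha with rfl | rfl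
              · exact Or.inr hxr
              · exact Or.inl (Or.inr hyl))
          ⟨x, by simp, hxr⟩ ⟨y, by simp, hyl⟩
        simp only [List.mem_cons, List.not_mem_nil, or_false] at hz
        rcases hz with hz | hz
        · exact hSr.ne_of_mem hzS (by rw [hz]; exact hxr) rfl
        · exact hSl.ne_of_mem hzS (by rw [hz]; exact hyl) rfl


theorem stmt_16 {V : Type*} (G : V → V → Prop) (T : SepTree V)
    (hvalid : SepTree.Valid G T) (hall : T.verts = Set.univ)
    (p q : V) (π : List V) (hπ : π.Chain' G)
    (hhead : π.head? = some p) (hlast : π.getLast? = some q) :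
    ∃ t : SepTree V, SepTree.Subtree t T ∧ (∀ x ∈ π, x ∈ t.verts) ∧
      ∃ x ∈ π, x ∈ t.sep := by
  have hne : π ≠ [] := by rintro rfl; simp at hhead
  exact sep_main G T hvalid π hne hπ (by simp [hall])
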